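/- For every fixed integer x, the limit of θ(x, t, 1, 1) − π(t+1)/4 as t → ∞ over integers t with |x|/t < 1/√2 equals 0; that is, t·arcsin(t/√(2(t² − x²))) − x·arcsin(x/√(t² − x²)) + π/4 − π(t+1)/4 → 0 as t → ∞. -/

import Mathlib

open Real

theorem stmt18 (x : ℤ) :
    Filter.Tendsto
      (fun t : ℕ =>
        (t : ℝ) * Real.arcsin ((t : ℝ) / Real.sqrt (2 * ((t : ℝ) ^ 2 - (x : ℝ) ^ 2))) -
          (x : ℝ) * Real.arcsin ((x : ℝ) / Real.sqrt ((t : ℝ) ^ 2 - (x : ℝ) ^ 2)) +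
          π / 4 - π * ((t : ℝ) + 1) / 4)
      Filter.atTop (nhds 0) := by
  set c : ℝ := (x : ℝ) ^ 2 with hc
  have hc0 : 0 ≤ c := sq_nonneg _
  set h : ℝ → ℝ := fun s => Real.arcsin (Real.sqrt (2 - 2 * c * s ^ 2))⁻¹ with hh
  have hsqrt2 : Real.sqrt 2 ≠ 0 := by positivity
  have h2sq : Real.sqrt 2 * Real.sqrt 2 = 2 := Real.mul_self_sqrt (by norm_num)
  have hinv2 : (Real.sqrt 2)⁻¹ = Real.sqrt 2 / 2 := by
    rw [eq_div_iff (by norm_num : (2:ℝ) ≠ 0), inv_eq_one_div, div_mul_eq_mul_div, one_mul,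
      div_eq_iff hsqrt2]
    linarith [h2sq]
  have h0 : h 0 = π / 4 := by
    simp only [hh, mul_zero, zero_pow, ne_eq, OfNat.ofNat_ne_zero, not_false_eq_true,
      sub_zero]
    rw [hinv2, ← Real.sin_pi_div_four,
      Real.arcsin_sin (by linarith [pi_pos]) (by linarith [pi_pos])]
  -- derivative of h at 0 is 0
  have hd : HasDerivAt h 0 0 := by
    have hf : HasDerivAt (fun s : ℝ => 2 - 2 * c * s ^ 2) 0 0 := by
      have := ((hasDerivAt_pow 2 (0:ℝ)).const_mul (2 * c)).const_sub 2
      simpa using this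
    have hf0 : (fun s : ℝ => 2 - 2 * c * s ^ 2) 0 ≠ 0 := by norm_num
    have hs : HasDerivAt (fun s : ℝ => Real.sqrt (2 - 2 * c * s ^ 2))
        (1 / (2 * Real.sqrt 2) * 0) 0 := by
      have := (Real.hasDerivAt_sqrt hf0).comp 0 hf
      simpa [Function.comp_def] using this
    have hs' : HasDerivAt (fun s : ℝ => Real.sqrt (2 - 2 * c * s ^ 2)) 0 0 := by
      simpa using hs
    have hinv : HasDerivAt (fun s : ℝ => (Real.sqrt (2 - 2 * c * s ^ 2))⁻¹) 0 0 := by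
      have := hs'.inv (by simpa using hsqrt2)
      simpa [Pi.inv_def] using this
    have hval : (Real.sqrt ((fun s : ℝ => 2 - 2 * c * s ^ 2) 0))⁻¹ = (Real.sqrt 2)⁻¹ := by
      norm_num
    have harg1 : (Real.sqrt 2)⁻¹ ≠ -1 := by
      have : (0:ℝ) < (Real.sqrt 2)⁻¹ := by positivity
      linarith
    have harg2 : (Real.sqrt 2)⁻¹ ≠ 1 := by
      have h1 : (1:ℝ) < Real.sqrt 2 := by
        rw [show (1:ℝ) = Real.sqrt 1 by simp]
        exact Real.sqrt_lt_sqrt (by norm_num) (by norm_num)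
      have : (Real.sqrt 2)⁻¹ < 1 := by
        rw [inv_lt_one_iff₀]; right; exact h1
      linarith
    have := (Real.hasDerivAt_arcsin
      (by simpa [hval] using harg1) (by simpa [hval] using harg2)).comp 0 hinv
    simpa [hh, Function.comp_def] using this
  have hslope : Filter.Tendsto (slope h 0) (nhdsWithin 0 {(0:ℝ)}ᶜ) (nhds 0) :=
    hasDerivAt_iff_tendsto_slope.mp hd
  -- 1/t tends to 0 within punctured neighborhood
  have hinv_t : Filter.Tendsto (fun t : ℕ => ((t : ℝ))⁻¹) Filter.atTop
      (nhdsWithin 0 {(0:ℝ)}ᶜ) := by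
    apply tendsto_nhdsWithin_of_tendsto_nhds_of_eventually_within
    · exact tendsto_inv_atTop_zero.comp tendsto_natCast_atTop_atTop
    · filter_upwards [Filter.eventually_ge_atTop 1] with t ht
      have : (0:ℝ) < (t:ℝ) := by exact_mod_cast Nat.lt_of_lt_of_le Nat.zero_lt_one ht
      simp [ne_of_gt (inv_pos.mpr this)]
  have hT1 : Filter.Tendsto (fun t : ℕ => slope h 0 ((t : ℝ))⁻¹) Filter.atTop (nhds 0) :=
    hslope.comp hinv_t
  -- second term tends to 0
  have hB : Filter.Tendsto (fun t : ℕ => (x : ℝ) / Real.sqrt ((t : ℝ) ^ 2 - c))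
      Filter.atTop (nhds 0) := by
    apply squeeze_zero_norm' (a := fun t : ℕ => 2 * |(x : ℝ)| / t)
    · filter_upwards [Filter.eventually_ge_atTop (2 * x.natAbs + 1)] with t ht
      have hxt : 2 * |(x : ℝ)| + 1 ≤ (t : ℝ) := by
        have : ((2 * x.natAbs + 1 : ℕ) : ℝ) ≤ (t : ℝ) := by exact_mod_cast ht
        push_cast at this
        rwa [Nat.cast_natAbs, Int.cast_abs] at this
      have habs : (0:ℝ) ≤ |(x : ℝ)| := by positivity
      have ht0 : (0:ℝ) < (t : ℝ) := by linarith
      have hgt : ((t : ℝ)/2) ^ 2 ≤ (t : ℝ) ^ 2 - c := by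
        have h1 : |(x : ℝ)| ^ 2 = c := by rw [sq_abs, hc]
        nlinarith [sq_nonneg ((t:ℝ) - 2 * (|x|:ℝ))]
      have hsq : (t : ℝ)/2 ≤ Real.sqrt ((t : ℝ) ^ 2 - c) := by
        rw [show (t:ℝ)/2 = Real.sqrt (((t:ℝ)/2)^2) by rw [Real.sqrt_sq (by positivity)]]
        exact Real.sqrt_le_sqrt hgt
      have hsqpos : (0:ℝ) < Real.sqrt ((t : ℝ) ^ 2 - c) := by linarith
      rw [norm_div, Real.norm_eq_abs, Real.norm_eq_abs, abs_of_pos hsqpos]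
      calc |(x : ℝ)| / Real.sqrt ((t : ℝ) ^ 2 - c)
          ≤ |(x : ℝ)| / ((t:ℝ)/2) := by
            apply div_le_div_of_nonneg_left _ (by positivity) hsq
            positivity
        _ = 2 * |(x : ℝ)| / t := by
            rw [div_div_eq_mul_div]; ring
    · have h1 : Filter.Tendsto (fun t : ℕ => ((t:ℝ))⁻¹) Filter.atTop (nhds 0) :=
        tendsto_inv_atTop_zero.comp tendsto_natCast_atTop_atTop
      have h2 := h1.const_mul (2 * |(x : ℝ)|)
      simp only [mul_zero] at h2
      exact h2.congr fun t => (div_eq_mul_inv _ _).symm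
  have hT2 : Filter.Tendsto
      (fun t : ℕ => (x : ℝ) * Real.arcsin ((x : ℝ) / Real.sqrt ((t : ℝ) ^ 2 - c)))
      Filter.atTop (nhds 0) := by
    have := (Real.continuous_arcsin.tendsto 0).comp hB
    rw [Real.arcsin_zero] at this
    simpa using this.const_mul (x : ℝ)
  -- combine
  have key : Filter.Tendsto
      (fun t : ℕ => slope h 0 ((t : ℝ))⁻¹ -
        (x : ℝ) * Real.arcsin ((x : ℝ) / Real.sqrt ((t : ℝ) ^ 2 - c)))
      Filter.atTop (nhds 0) := by
    simpa using hT1.sub hT2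
  apply key.congr'
  filter_upwards [Filter.eventually_ge_atTop (x.natAbs + 1)] with t ht
  have hxt : |(x : ℝ)| + 1 ≤ (t : ℝ) := by
    have : ((x.natAbs + 1 : ℕ) : ℝ) ≤ (t : ℝ) := by exact_mod_cast ht
    push_cast at this
    rwa [Nat.cast_natAbs, Int.cast_abs] at this
  have habs : (0:ℝ) ≤ |(x : ℝ)| := by positivity
  have ht0 : (0:ℝ) < (t : ℝ) := by linarith
  have hcx : c < (t : ℝ) ^ 2 := by
    have h1 : |(x : ℝ)| ^ 2 = c := by rw [sq_abs, hc]
    nlinarith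
  -- rewrite h (t⁻¹)
  have harg : (2 : ℝ) - 2 * c * ((t:ℝ)⁻¹) ^ 2 = 2 * ((t:ℝ)^2 - c) / (t:ℝ)^2 := by
    field_simp
  have hpos : (0:ℝ) < 2 * ((t:ℝ)^2 - c) := by linarith
  have hsqrt_eq : Real.sqrt (2 - 2 * c * ((t:ℝ)⁻¹) ^ 2)
      = Real.sqrt (2 * ((t:ℝ)^2 - c)) / (t:ℝ) := by
    rw [harg, Real.sqrt_div hpos.le, Real.sqrt_sq ht0.le]
  have hval : h ((t:ℝ))⁻¹ = Real.arcsin ((t:ℝ) / Real.sqrt (2 * ((t:ℝ)^2 - c))) := by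
    rw [hh]
    simp only
    rw [hsqrt_eq, inv_div]
  have hslope_eq : slope h 0 ((t:ℝ))⁻¹
      = (t:ℝ) * (Real.arcsin ((t:ℝ) / Real.sqrt (2 * ((t:ℝ)^2 - c))) - π/4) := by
    rw [slope_def_field, hval, h0, sub_zero, div_inv_eq_mul]
    ring
  rw [hslope_eq]
  ring
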